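/- Let a = x₀ < x₁ < ⋯ < x_m = b and c = y₀ < y₁ < ⋯ < y_n = d be partitions, and let F = (M,N) be a continuous vector field on [a,b] × [c,d]. Then the sum over all i ∈ {0,…,m−1} and j ∈ {0,…,n−1} of the counterclockwise circulation of F around the boundary of the subrectangle [x_i, x_{i+1}] × [y_j, y_{j+1}] equals the counterclockwise circulation of F around the boundary of the whole rectangle [a,b] × [c,d]; the contributions from all interior edges cancel in pairs. -/

import Mathlib

open MeasureTheory

/-- The counterclockwise circulation of the vector field `(M, N)` around the
boundary of the rectangle `[p,q] × [r,s]`. -/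
noncomputable def circulation (M N : ℝ × ℝ → ℝ) (p q r s : ℝ) : ℝ :=
  (∫ t in p..q, M (t, r)) + (∫ t in r..s, N (q, t))
    - (∫ t in p..q, M (t, s)) - (∫ t in r..s, N (p, t))

/-- Telescoping sum of differences over a `Fin` index. -/
lemma fin_sum_tel (n : ℕ) (f : Fin (n + 1) → ℝ) :
    ∑ j : Fin n, (f j.castSucc - f j.succ) = f 0 - f (Fin.last n) := by
  have key : ∀ j : Fin n,
      f j.castSucc - f j.succ
        = (fun k : ℕ => f ⟨min k n, Nat.lt_succ_of_le (min_le_right _ _)⟩) j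
          - (fun k : ℕ => f ⟨min k n, Nat.lt_succ_of_le (min_le_right _ _)⟩) (j + 1) := by
    intro j
    have h1 : min (j : ℕ) n = (j : ℕ) := min_eq_left j.2.le
    have h2 : min ((j : ℕ) + 1) n = (j : ℕ) + 1 := min_eq_left j.2
    simp only [h1, h2]
    congr 1 <;> congr 1 <;> apply Fin.ext <;> simp [h1, h2]
  calc ∑ j : Fin n, (f j.castSucc - f j.succ)
      = ∑ k ∈ Finset.range n,
          ((fun k : ℕ => f ⟨min k n, Nat.lt_succ_of_le (min_le_right _ _)⟩) k
            - (fun k : ℕ => f ⟨min k n, Nat.lt_succ_of_le (min_le_right _ _)⟩) (k + 1)) := by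
        rw [← Fin.sum_univ_eq_sum_range]; exact Finset.sum_congr rfl fun j _ => key j
    _ = f 0 - f (Fin.last n) := by
        rw [Finset.sum_range_sub']
        congr 1 <;> congr 1 <;> apply Fin.ext <;> simp [Fin.last]

/-- Sum of interval integrals over adjacent intervals given by a monotone `Fin` partition. -/
lemma fin_sum_adjacent (n : ℕ) (y : Fin (n + 1) → ℝ) (hy : Monotone y) (f : ℝ → ℝ)
    (hf : ContinuousOn f (Set.Icc (y 0) (y (Fin.last n)))) :
    ∑ j : Fin n, ∫ t in (y j.castSucc)..(y j.succ), f t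
      = ∫ t in (y 0)..(y (Fin.last n)), f t := by
  set Y : ℕ → ℝ := fun k => y ⟨min k n, Nat.lt_succ_of_le (min_le_right _ _)⟩ with hY
  have hYj : ∀ k : ℕ, (h : k ≤ n) → Y k = y ⟨k, Nat.lt_succ_of_le h⟩ := by
    intro k h
    simp only [hY]
    exact congrArg y (Fin.ext (by simp [min_eq_left h]))
  have hmem : ∀ k : Fin (n + 1), y k ∈ Set.Icc (y 0) (y (Fin.last n)) := fun k =>
    ⟨hy (Fin.zero_le k), hy (Fin.le_last k)⟩
  have hint : ∀ k < n, IntervalIntegrable f volume (Y k) (Y (k + 1)) := by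
    intro k hk
    apply (hf.mono _).intervalIntegrable
    rw [Set.uIcc_of_le]
    · exact Set.Icc_subset_Icc (hmem _).1 (hmem _).2
    · exact hy (by rw [Fin.mk_le_mk]; omega)
  have := intervalIntegral.sum_integral_adjacent_intervals (μ := volume) (a := Y) hint
  have hcast : ∀ j : Fin n, (∫ t in (y j.castSucc)..(y j.succ), f t)
      = ∫ t in (Y j)..(Y (j + 1)), f t := by
    intro j
    rw [hYj j j.2.le, hYj (j + 1) j.2]
    rfl
  calc ∑ j : Fin n, ∫ t in (y j.castSucc)..(y j.succ), f t
      = ∑ k ∈ Finset.range n, ∫ t in (Y k)..(Y (k + 1)), f t := by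
        rw [← Fin.sum_univ_eq_sum_range]; exact Finset.sum_congr rfl fun j _ => hcast j
    _ = ∫ t in (Y 0)..(Y n), f t := this
    _ = ∫ t in (y 0)..(y (Fin.last n)), f t := by
        rw [hYj 0 (Nat.zero_le n), hYj n le_rfl]
        rfl

/-- **The Whirl theorem for a rectangular grid.** -/
theorem sum_circulation_subrectangles
    (a b c d : ℝ) (m n : ℕ)
    (x : Fin (m + 1) → ℝ) (y : Fin (n + 1) → ℝ)
    (hx : StrictMono x) (hy : StrictMono y)
    (hx0 : x 0 = a) (hxm : x (Fin.last m) = b)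
    (hy0 : y 0 = c) (hyn : y (Fin.last n) = d)
    (M N : ℝ × ℝ → ℝ)
    (hM : ContinuousOn M (Set.Icc a b ×ˢ Set.Icc c d))
    (hN : ContinuousOn N (Set.Icc a b ×ˢ Set.Icc c d)) :
    ∑ i : Fin m, ∑ j : Fin n,
        circulation M N (x i.castSucc) (x i.succ) (y j.castSucc) (y j.succ)
      = circulation M N a b c d := by
  have hxmem : ∀ k : Fin (m + 1), x k ∈ Set.Icc a b := by
    intro k
    exact ⟨hx0 ▸ hx.monotone (Fin.zero_le k), hxm ▸ hx.monotone (Fin.le_last k)⟩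
  have hymem : ∀ k : Fin (n + 1), y k ∈ Set.Icc c d := by
    intro k
    exact ⟨hy0 ▸ hy.monotone (Fin.zero_le k), hyn ▸ hy.monotone (Fin.le_last k)⟩
  -- continuity of slices
  have hMr : ∀ r ∈ Set.Icc c d, ContinuousOn (fun t => M (t, r)) (Set.Icc a b) := by
    intro r hr
    exact hM.comp (Continuous.continuousOn (by fun_prop)) (fun t ht => Set.mk_mem_prod ht hr)
  have hNu : ∀ u ∈ Set.Icc a b, ContinuousOn (fun t => N (u, t)) (Set.Icc c d) := by
    intro u hu
    exact hN.comp (Continuous.continuousOn (by fun_prop)) (fun t ht => Set.mk_mem_prod hu ht)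
  -- column sum: for fixed p q in [a,b], sum over j gives circulation over [p,q]×[c,d]
  have col : ∀ p ∈ Set.Icc a b, ∀ q ∈ Set.Icc a b,
      ∑ j : Fin n, circulation M N p q (y j.castSucc) (y j.succ)
        = circulation M N p q c d := by
    intro p hp q hq
    have e1 : ∑ j : Fin n,
        ((∫ t in p..q, M (t, y j.castSucc)) - (∫ t in p..q, M (t, y j.succ)))
        = (∫ t in p..q, M (t, c)) - (∫ t in p..q, M (t, d)) := by
      have := fin_sum_tel n (fun k => ∫ t in p..q, M (t, y k))
      simpa [hy0, hyn] using this
    have e2 : ∑ j : Fin n, ∫ t in (y j.castSucc)..(y j.succ), N (q, t)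
        = ∫ t in c..d, N (q, t) := by
      have := fin_sum_adjacent n y hy.monotone (fun t => N (q, t))
        (by rw [hy0, hyn]; exact hNu q hq)
      simpa [hy0, hyn] using this
    have e3 : ∑ j : Fin n, ∫ t in (y j.castSucc)..(y j.succ), N (p, t)
        = ∫ t in c..d, N (p, t) := by
      have := fin_sum_adjacent n y hy.monotone (fun t => N (p, t))
        (by rw [hy0, hyn]; exact hNu p hp)
      simpa [hy0, hyn] using this
    unfold circulation
    calc ∑ j : Fin n,
          ((∫ t in p..q, M (t, y j.castSucc)) + (∫ t in (y j.castSucc)..(y j.succ), N (q, t))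
            - (∫ t in p..q, M (t, y j.succ)) - (∫ t in (y j.castSucc)..(y j.succ), N (p, t)))
        = (∑ j : Fin n,
            ((∫ t in p..q, M (t, y j.castSucc)) - (∫ t in p..q, M (t, y j.succ))))
          + (∑ j : Fin n, ∫ t in (y j.castSucc)..(y j.succ), N (q, t))
          - (∑ j : Fin n, ∫ t in (y j.castSucc)..(y j.succ), N (p, t)) := by
          rw [← Finset.sum_add_distrib, ← Finset.sum_sub_distrib]
          exact Finset.sum_congr rfl fun j _ => by ring
      _ = (∫ t in p..q, M (t, c)) + (∫ t in c..d, N (q, t))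
          - (∫ t in p..q, M (t, d)) - (∫ t in c..d, N (p, t)) := by
          rw [e1, e2, e3]; ring
  -- now sum over columns
  have step : ∀ i : Fin m,
      ∑ j : Fin n, circulation M N (x i.castSucc) (x i.succ) (y j.castSucc) (y j.succ)
        = circulation M N (x i.castSucc) (x i.succ) c d :=
    fun i => col _ (hxmem _) _ (hxmem _)
  rw [Finset.sum_congr rfl fun i _ => step i]
  -- row sum
  have f1 : ∑ i : Fin m, ∫ t in (x i.castSucc)..(x i.succ), M (t, c)
      = ∫ t in a..b, M (t, c) := by
    have := fin_sum_adjacent m x hx.monotone (fun t => M (t, c))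
      (by rw [hx0, hxm]; exact hMr c ⟨le_refl c, (hymem 0).2.trans_eq' hy0⟩)
    simpa [hx0, hxm] using this
  have f2 : ∑ i : Fin m, ∫ t in (x i.castSucc)..(x i.succ), M (t, d)
      = ∫ t in a..b, M (t, d) := by
    have := fin_sum_adjacent m x hx.monotone (fun t => M (t, d))
      (by rw [hx0, hxm]; exact hMr d ⟨(hymem (Fin.last n)).1.trans_eq hyn, le_refl d⟩)
    simpa [hx0, hxm] using this
  have f3 : ∑ i : Fin m,
      ((∫ t in c..d, N (x i.succ, t)) - (∫ t in c..d, N (x i.castSucc, t)))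
      = (∫ t in c..d, N (b, t)) - (∫ t in c..d, N (a, t)) := by
    have := fin_sum_tel m (fun k => ∫ t in c..d, N (x k, t))
    have h := congrArg Neg.neg this
    simp only [← Finset.sum_neg_distrib, neg_sub] at h
    simpa [hx0, hxm] using h
  unfold circulation
  calc ∑ i : Fin m,
        ((∫ t in (x i.castSucc)..(x i.succ), M (t, c)) + (∫ t in c..d, N (x i.succ, t))
          - (∫ t in (x i.castSucc)..(x i.succ), M (t, d)) - (∫ t in c..d, N (x i.castSucc, t)))
      = (∑ i : Fin m, ∫ t in (x i.castSucc)..(x i.succ), M (t, c))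
        - (∑ i : Fin m, ∫ t in (x i.castSucc)..(x i.succ), M (t, d))
        + (∑ i : Fin m,
            ((∫ t in c..d, N (x i.succ, t)) - (∫ t in c..d, N (x i.castSucc, t)))) := by
        rw [← Finset.sum_sub_distrib, ← Finset.sum_add_distrib]
        exact Finset.sum_congr rfl fun i _ => by ring
    _ = (∫ t in a..b, M (t, c)) + (∫ t in c..d, N (b, t))
        - (∫ t in a..b, M (t, d)) - (∫ t in c..d, N (a, t)) := by
        rw [f1, f2, f3]; ring
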